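/- Let h₁, h₂ ∈ ℂ^M be linearly independent, σ² > 0, r₁ > 0, and sin²α = 1 − |h₁ᴴh₂|²/(‖h₁‖²‖h₂‖²) > 0. Then the minimum of ‖w‖² over all w ∈ ℂ^M with h₂ᴴw = 0 and |h₁ᴴw|² ≥ r₁σ² equals r₁σ²/(‖h₁‖²sin²α), and it is attained at w = σ√r₁·(‖h₂‖²h₁ − (h₂ᴴh₁)h₂)/(‖h₁‖²‖h₂‖²sin²α). -/

import Mathlib

open scoped InnerProductSpace

/-- The core single-user minimum-norm claim in the proof of Lemma 3 (Appendix E): among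
`w ⊥ h₂` with `|h₁ᴴw|² ≥ r₁σ²`, the minimum of `‖w‖²` is `r₁σ²/(‖h₁‖² sin²α)`, attained
at the scaled projection of `h₁` onto the orthogonal complement of `h₂`. -/
theorem stmt_13 (M : ℕ) (h₁ h₂ : EuclideanSpace ℂ (Fin M))
    (hind : LinearIndependent ℂ ![h₁, h₂])
    (σ r₁ : ℝ) (hσ : 0 < σ) (hr₁ : 0 < r₁)
    (s : ℝ) (hs : s = 1 - ‖⟪h₁, h₂⟫_ℂ‖ ^ 2 / (‖h₁‖ ^ 2 * ‖h₂‖ ^ 2)) (hspos : 0 < s)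
    (w : EuclideanSpace ℂ (Fin M))
    (hw : w = ((σ * Real.sqrt r₁ / (‖h₁‖ ^ 2 * ‖h₂‖ ^ 2 * s) : ℝ) : ℂ) •
        (((‖h₂‖ ^ 2 : ℝ) : ℂ) • h₁ - ⟪h₂, h₁⟫_ℂ • h₂)) :
    IsLeast
      ((fun u : EuclideanSpace ℂ (Fin M) => ‖u‖ ^ 2) ''
        {u : EuclideanSpace ℂ (Fin M) | ⟪h₂, u⟫_ℂ = 0 ∧ r₁ * σ ^ 2 ≤ ‖⟪h₁, u⟫_ℂ‖ ^ 2})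
      (r₁ * σ ^ 2 / (‖h₁‖ ^ 2 * s)) ∧
    (⟪h₂, w⟫_ℂ = 0 ∧ r₁ * σ ^ 2 ≤ ‖⟪h₁, w⟫_ℂ‖ ^ 2) ∧
    ‖w‖ ^ 2 = r₁ * σ ^ 2 / (‖h₁‖ ^ 2 * s) := by
  have hne1 : h₁ ≠ 0 := by have := hind.ne_zero 0; simpa using this
  have hne2 : h₂ ≠ 0 := by have := hind.ne_zero 1; simpa using this
  have hn1 : (0:ℝ) < ‖h₁‖ := norm_pos_iff.mpr hne1
  have hn2 : (0:ℝ) < ‖h₂‖ := norm_pos_iff.mpr hne2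
  have hn1C : ((‖h₁‖ : ℝ) : ℂ) ≠ 0 := Complex.ofReal_ne_zero.mpr hn1.ne'
  have hn2C : ((‖h₂‖ : ℝ) : ℂ) ≠ 0 := Complex.ofReal_ne_zero.mpr hn2.ne'
  have hsC : ((s : ℝ) : ℂ) ≠ 0 := Complex.ofReal_ne_zero.mpr hspos.ne'
  set α : ℂ := ⟪h₂, h₁⟫_ℂ / ((‖h₂‖ ^ 2 : ℝ) : ℂ) with hα
  set p : EuclideanSpace ℂ (Fin M) := h₁ - α • h₂ with hp
  have hconj : ⟪h₂, h₁⟫_ℂ = starRingEnd ℂ ⟪h₁, h₂⟫_ℂ := (inner_conj_symm h₂ h₁).symm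
  have hmul : ⟪h₂, h₁⟫_ℂ * ⟪h₁, h₂⟫_ℂ = ((‖⟪h₁, h₂⟫_ℂ‖ ^ 2 : ℝ) : ℂ) := by
    rw [hconj, mul_comm]; push_cast; exact Complex.mul_conj' _
  have h2p : ⟪h₂, p⟫_ℂ = 0 := by
    rw [hp, inner_sub_right, inner_smul_right, inner_self_eq_norm_sq_to_K, hα]
    push_cast
    field_simp
    exact (congrArg (⟪h₂, h₁⟫_ℂ * ·) (sub_self _)).trans ((mul_zero _).trans (mul_zero _).symm)
  have h1p : ⟪h₁, p⟫_ℂ = ((‖h₁‖ ^ 2 * s : ℝ) : ℂ) := by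
    rw [hp, inner_sub_right, inner_smul_right, hα, hs, inner_self_eq_norm_sq_to_K,
      div_mul_eq_mul_div, hmul]
    push_cast
    field_simp
    exact congrArg (· - _) (mul_comm _ _)
  have hpp : ⟪p, p⟫_ℂ = ((‖h₁‖ ^ 2 * s : ℝ) : ℂ) := by
    have : ⟪p, p⟫_ℂ = ⟪h₁, p⟫_ℂ - starRingEnd ℂ α * ⟪h₂, p⟫_ℂ := by
      rw [hp]
      rw [inner_sub_left, inner_smul_left]
    rw [this, h2p, h1p]; ring
  have hnp : ‖p‖ ^ 2 = ‖h₁‖ ^ 2 * s := by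
    have := inner_self_eq_norm_sq_to_K (𝕜 := ℂ) p
    rw [hpp, ← RCLike.ofReal_pow] at this
    exact ((RCLike.ofReal_inj (K := ℂ)).mp this).symm
  have hps : (0:ℝ) < ‖h₁‖ ^ 2 * s := by positivity
  -- w = t • p
  set t : ℝ := σ * Real.sqrt r₁ / (‖h₁‖ ^ 2 * s) with ht
  have htpos : 0 < t := by
    have : 0 < Real.sqrt r₁ := Real.sqrt_pos.mpr hr₁
    positivity
  have hwt : w = ((t : ℝ) : ℂ) • p := by
    have e1 : ((σ * Real.sqrt r₁ / (‖h₁‖ ^ 2 * ‖h₂‖ ^ 2 * s) : ℝ) : ℂ) * ((‖h₂‖ ^ 2 : ℝ) : ℂ)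
        = ((t : ℝ) : ℂ) := by
      rw [ht]; push_cast; field_simp
    have e2 : ((σ * Real.sqrt r₁ / (‖h₁‖ ^ 2 * ‖h₂‖ ^ 2 * s) : ℝ) : ℂ) * ⟪h₂, h₁⟫_ℂ
        = ((t : ℝ) : ℂ) * α := by
      rw [ht, hα]; push_cast; field_simp
    rw [hw, hp, smul_sub, smul_smul, smul_smul, e1, e2, smul_sub, smul_smul]
  have h2w : ⟪h₂, w⟫_ℂ = 0 := by rw [hwt, inner_smul_right, h2p, mul_zero]
  have h1w : ⟪h₁, w⟫_ℂ = ((σ * Real.sqrt r₁ : ℝ) : ℂ) := by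
    rw [hwt, inner_smul_right, h1p, ht]
    push_cast
    field_simp
  have hsq : (Real.sqrt r₁) ^ 2 = r₁ := Real.sq_sqrt hr₁.le
  have h1wnorm : ‖⟪h₁, w⟫_ℂ‖ ^ 2 = r₁ * σ ^ 2 := by
    rw [h1w, Complex.norm_real, Real.norm_eq_abs, sq_abs, mul_pow, hsq]; ring
  have hwnorm : ‖w‖ ^ 2 = r₁ * σ ^ 2 / (‖h₁‖ ^ 2 * s) := by
    rw [hwt, norm_smul, mul_pow, Complex.norm_real, Real.norm_eq_abs, sq_abs, hnp, ht]
    rw [div_pow, mul_pow, hsq]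
    field_simp
  refine ⟨⟨⟨w, ⟨h2w, h1wnorm.ge⟩, hwnorm⟩, ?_⟩, ⟨h2w, h1wnorm.ge⟩, hwnorm⟩
  rintro x ⟨u, ⟨hu2, hu1⟩, rfl⟩
  simp only
  have hpu : ⟪h₁, u⟫_ℂ = ⟪p, u⟫_ℂ := by
    rw [hp, inner_sub_left, inner_smul_left, hu2, mul_zero, sub_zero]
  have hcs : ‖⟪p, u⟫_ℂ‖ ≤ ‖p‖ * ‖u‖ := norm_inner_le_norm p u
  have hcs2 : ‖⟪p, u⟫_ℂ‖ ^ 2 ≤ ‖p‖ ^ 2 * ‖u‖ ^ 2 := by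
    rw [← mul_pow]; exact pow_le_pow_left₀ (norm_nonneg _) hcs 2
  have : r₁ * σ ^ 2 ≤ (‖h₁‖ ^ 2 * s) * ‖u‖ ^ 2 := by
    calc r₁ * σ ^ 2 ≤ ‖⟪h₁, u⟫_ℂ‖ ^ 2 := hu1
    _ = ‖⟪p, u⟫_ℂ‖ ^ 2 := by rw [hpu]
    _ ≤ ‖p‖ ^ 2 * ‖u‖ ^ 2 := hcs2
    _ = (‖h₁‖ ^ 2 * s) * ‖u‖ ^ 2 := by rw [hnp]
  exact (div_le_iff₀ hps).mpr (by linarith [this])
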